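/- Let u, v ∈ ℝ² with |u| = 1 and v ≠ 0. Let A, B:[0,1]→[0,∞) be continuous with A(0) = 1, B(0) = 0, and suppose q(t) := A(t)u + B(t)v ≠ 0 for all t ∈ [0,1]. Let η:[0,1]→ℝ be continuous with q(t) = |q(t)|·(cos η(t), sin η(t)) for all t and u = (cos η(0), sin η(0)). Then |η(t) − η(0)| ≤ π for all t ∈ [0,1]. -/

import Mathlib

set_option maxHeartbeats 1000000 in
/-- Let `u, v ∈ ℝ²` (written in components) with `|u| = 1` and `v ≠ 0`. Let
`A, B : [0,1] → [0,∞)` be continuous with `A(0) = 1`, `B(0) = 0`, and suppose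
`q(t) = A(t)u + B(t)v ≠ 0` for all `t ∈ [0,1]`. Let `η : [0,1] → ℝ` be continuous with
`q(t) = |q(t)|·(cos η(t), sin η(t))` for all `t` and `u = (cos η(0), sin η(0))`. Then
`|η(t) − η(0)| ≤ π` for all `t ∈ [0,1]`. -/
theorem stmt10 (u1 u2 v1 v2 : ℝ) (hu : u1 ^ 2 + u2 ^ 2 = 1) (hv : (v1, v2) ≠ (0, 0))
    (A B : ℝ → ℝ)
    (hAc : ContinuousOn A (Set.Icc 0 1)) (hBc : ContinuousOn B (Set.Icc 0 1))
    (hAnn : ∀ t ∈ Set.Icc (0:ℝ) 1, 0 ≤ A t) (hBnn : ∀ t ∈ Set.Icc (0:ℝ) 1, 0 ≤ B t)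
    (hA0 : A 0 = 1) (hB0 : B 0 = 0)
    (q1 q2 : ℝ → ℝ)
    (hq1 : ∀ t, q1 t = A t * u1 + B t * v1)
    (hq2 : ∀ t, q2 t = A t * u2 + B t * v2)
    (hqne : ∀ t ∈ Set.Icc (0:ℝ) 1, (q1 t, q2 t) ≠ (0, 0))
    (η : ℝ → ℝ) (hηc : ContinuousOn η (Set.Icc 0 1))
    (hlift1 : ∀ t ∈ Set.Icc (0:ℝ) 1,
        q1 t = Real.sqrt ((q1 t) ^ 2 + (q2 t) ^ 2) * Real.cos (η t))
    (hlift2 : ∀ t ∈ Set.Icc (0:ℝ) 1,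
        q2 t = Real.sqrt ((q1 t) ^ 2 + (q2 t) ^ 2) * Real.sin (η t))
    (hu1 : u1 = Real.cos (η 0)) (hu2 : u2 = Real.sin (η 0)) :
    ∀ t ∈ Set.Icc (0:ℝ) 1, |η t - η 0| ≤ Real.pi := by
  have hπ := Real.pi_pos
  obtain ⟨φ, hkey, habs0⟩ : ∃ φ : ℝ, (∀ s ∈ Set.Icc (0:ℝ) 1, 0 ≤ Real.cos (η s - φ)) ∧
      |η 0 - φ| ≤ Real.pi / 2 := by
    set α := η 0 with hα
    -- represent v in polar form
    set z : ℂ := ⟨v1, v2⟩ with hzdef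
    have hzne : z ≠ 0 := by
      intro h
      apply hv
      obtain ⟨h1, h2⟩ := Complex.ext_iff.mp h
      simp only [hzdef, Complex.zero_re, Complex.zero_im] at h1 h2
      exact Prod.ext h1 h2
    have habs : (0:ℝ) < ‖z‖ := norm_pos_iff.mpr hzne
    set θ := Complex.arg z with hθdef
    have hv1 : v1 = ‖z‖ * Real.cos θ := by
      rw [hθdef, Complex.cos_arg hzne]
      field_simp
      rfl
    have hv2 : v2 = ‖z‖ * Real.sin θ := by
      rw [hθdef, Complex.sin_arg]
      field_simp
      rfl
    -- choose δ ∈ [-π, π] with θ = α + δ + 2πn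
    set n : ℤ := round ((θ - α) / (2 * Real.pi)) with hn
    set δ : ℝ := θ - α - 2 * Real.pi * n with hδ
    have hδle : |δ| ≤ Real.pi := by
      have h := abs_sub_round ((θ - α) / (2 * Real.pi))
      have h2 : δ = (2 * Real.pi) * ((θ - α) / (2 * Real.pi) - n) := by
        field_simp [hδ]
        exact hδ
      rw [h2, abs_mul, abs_of_pos (by positivity)]
      calc 2 * Real.pi * |(θ - α) / (2 * Real.pi) - ↑n| ≤ 2 * Real.pi * (1/2) := by
            exact mul_le_mul_of_nonneg_left h (by positivity)
        _ = Real.pi := by ring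
    set φ : ℝ := α + δ / 2 with hφ
    have hcosδ : 0 ≤ Real.cos (δ / 2) := by
      apply Real.cos_nonneg_of_mem_Icc
      constructor
      · nlinarith [abs_le.mp hδle]
      · nlinarith [abs_le.mp hδle]
    -- u-direction pairing
    have hupair : u1 * Real.cos φ + u2 * Real.sin φ = Real.cos (δ / 2) := by
      rw [hu1, hu2, ← Real.cos_sub]
      have : α - φ = -(δ / 2) := by rw [hφ]; ring
      rw [this, Real.cos_neg]
    -- v-direction pairing
    have hvpair : v1 * Real.cos φ + v2 * Real.sin φ = ‖z‖ * Real.cos (δ / 2) := by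
      rw [hv1, hv2]
      have h1 : ‖z‖ * Real.cos θ * Real.cos φ + ‖z‖ * Real.sin θ * Real.sin φ
          = ‖z‖ * Real.cos (θ - φ) := by rw [Real.cos_sub]; ring
      rw [h1]
      congr 1
      have h2 : θ - φ = δ / 2 + n * (2 * Real.pi) := by rw [hφ, hδ]; push_cast; ring
      rw [h2, Real.cos_add_int_mul_two_pi]
    -- cos (η s - φ) ≥ 0 for all s ∈ [0,1]
    have hkey : ∀ s ∈ Set.Icc (0:ℝ) 1, 0 ≤ Real.cos (η s - φ) := by
      intro s hs
      have hqpos : 0 < q1 s ^ 2 + q2 s ^ 2 := by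
        rcases lt_or_eq_of_le (by positivity : (0:ℝ) ≤ q1 s ^ 2 + q2 s ^ 2) with h | h
        · exact h
        · exfalso; apply hqne s hs
          have h1 : q1 s = 0 := by nlinarith
          have h2 : q2 s = 0 := by nlinarith
          simp [h1, h2]
      have hr : 0 < Real.sqrt (q1 s ^ 2 + q2 s ^ 2) := Real.sqrt_pos.mpr hqpos
      have e1 := hlift1 s hs
      have e2 := hlift2 s hs
      have heq : q1 s * Real.cos φ + q2 s * Real.sin φ
          = Real.sqrt (q1 s ^ 2 + q2 s ^ 2) * Real.cos (η s - φ) := by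
        rw [Real.cos_sub]
        linear_combination Real.cos φ * e1 + Real.sin φ * e2
      have hge : 0 ≤ q1 s * Real.cos φ + q2 s * Real.sin φ := by
        rw [hq1 s, hq2 s]
        have : A s * u1 * Real.cos φ + B s * v1 * Real.cos φ +
            (A s * u2 * Real.sin φ + B s * v2 * Real.sin φ)
            = A s * (u1 * Real.cos φ + u2 * Real.sin φ)
              + B s * (v1 * Real.cos φ + v2 * Real.sin φ) := by ring
        calc (0:ℝ) ≤ A s * (u1 * Real.cos φ + u2 * Real.sin φ)
              + B s * (v1 * Real.cos φ + v2 * Real.sin φ) := by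
                rw [hupair, hvpair]
                have := hAnn s hs
                have := hBnn s hs
                positivity
          _ = (A s * u1 + B s * v1) * Real.cos φ + (A s * u2 + B s * v2) * Real.sin φ := by ring
      rw [heq] at hge
      exact (mul_nonneg_iff_of_pos_left hr).mp hge
    refine ⟨φ, hkey, ?_⟩
    have hg0 : η 0 - φ = -(δ / 2) := by rw [hφ, ← hα]; ring
    have habs0 : |η 0 - φ| ≤ Real.pi / 2 := by
      rw [hg0, abs_neg]
      have := abs_le.mp hδle
      rw [abs_le]
      constructor <;> linarith [this.1, this.2]
    exact habs0
  have hgc : ContinuousOn (fun r => η r - φ) (Set.Icc (0:ℝ) 1) :=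
    hηc.sub continuousOn_const
  -- main claim : |η s - φ| ≤ π/2 on [0,1]
  have hmain : ∀ s ∈ Set.Icc (0:ℝ) 1, |η s - φ| ≤ Real.pi / 2 := by
    intro s hs
    by_contra hcon
    push_neg at hcon
    have hsub : Set.Icc (0:ℝ) s ⊆ Set.Icc (0:ℝ) 1 :=
      Set.Icc_subset_Icc le_rfl hs.2
    have hgc' : ContinuousOn (fun r => η r - φ) (Set.Icc (0:ℝ) s) := hgc.mono hsub
    have h0le := abs_le.mp habs0
    rcases lt_or_ge (Real.pi / 2) (η s - φ) with hx | hx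
    · -- η s - φ > π/2
      set c : ℝ := min ((Real.pi / 2 + (η s - φ)) / 2) Real.pi with hc
      have hc1 : Real.pi / 2 < c := lt_min (by linarith) (by linarith [Real.pi_pos])
      have hc2 : c ≤ Real.pi := min_le_right _ _
      have hc3 : c ≤ η s - φ := le_trans (min_le_left _ _) (by linarith)
      have hmem : c ∈ Set.Icc (η 0 - φ) (η s - φ) := ⟨by linarith [h0le.2], hc3⟩
      obtain ⟨w, hw, hwc⟩ := intermediate_value_Icc hs.1 hgc' hmem
      have hwin : w ∈ Set.Icc (0:ℝ) 1 := hsub hw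
      have hwc' : η w - φ = c := hwc
      have h1 := hkey w hwin
      rw [hwc'] at h1
      have h2 : Real.cos c < 0 :=
        Real.cos_neg_of_pi_div_two_lt_of_lt hc1 (by linarith)
      linarith
    · -- η s - φ < -π/2
      have hx' : η s - φ < -(Real.pi / 2) := by
        rcases abs_cases (η s - φ) with ⟨h1, _⟩ | ⟨h1, _⟩ <;> linarith
      set c : ℝ := max ((-(Real.pi / 2) + (η s - φ)) / 2) (-Real.pi) with hc
      have hc1 : c < -(Real.pi / 2) := max_lt (by linarith) (by linarith [Real.pi_pos])
      have hc2 : -Real.pi ≤ c := le_max_right _ _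
      have hc3 : η s - φ ≤ c := le_trans (by linarith) (le_max_left _ _)
      have hmem : c ∈ Set.Icc (η s - φ) (η 0 - φ) := ⟨hc3, by linarith [h0le.1]⟩
      obtain ⟨w, hw, hwc⟩ := intermediate_value_Icc' hs.1 hgc' hmem
      have hwin : w ∈ Set.Icc (0:ℝ) 1 := hsub hw
      have hwc' : η w - φ = c := hwc
      have h1 := hkey w hwin
      rw [hwc'] at h1
      have hcosc : Real.cos c < 0 := by
        rw [← Real.cos_neg]
        exact Real.cos_neg_of_pi_div_two_lt_of_lt (by linarith) (by linarith)
      linarith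
  -- conclude
  intro t ht
  have h1 := abs_le.mp (hmain t ht)
  have h2 := abs_le.mp habs0
  rw [abs_le]
  constructor <;> [linarith [h1.1, h2.2]; linarith [h1.2, h2.1]]
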